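/- The contingent context of natural revision: for every connected preorder C and conditional P>A with P∧A satisfiable, C nat(P>A) = C unc(Q>A) where Q is P restricted to the models in classes up to minidx(P∧A), i.e., Q = P ∧ (≤min(P∧A)). -/

import Mathlib

open Classical

/- Models are elements of a finite type `M`; propositional formulas are identified with
their sets of models (`Set M`).  A connected preorder (ordered partition
`[C(0),…,C(m)]`, classes possibly empty) is represented by its rank function
`r : M → ℕ`, where `r I` is the index of the class of `I`.  Equality of orders means
equality of the induced binary relations (`sameOrd`). -/

/-- least class index containing a model of `F` -/
noncomputable def minidx {M : Type*} (r : M → ℕ) (F : Set M) : ℕ := sInf (r '' F)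

/-- greatest class index containing a model of `F` -/
noncomputable def maxidx {M : Type*} (r : M → ℕ) (F : Set M) : ℕ := sSup (r '' F)

/-- propositional natural revision:
`C nat(A) = [C(minidx A)∩A, C(0),…,C(minidx A−1), C(minidx A)∖A, C(minidx A+1),…,C(m)]` -/
noncomputable def natSimple {M : Type*} (r : M → ℕ) (A : Set M) : M → ℕ :=
  fun I => if I ∈ A ∧ r I = minidx r A then 0 else r I + 1

/-- conditional natural revision: the models of `P∧¬A` in classes
`minidx(P)..minidx(P∧A)` are dropped below the other models of those classes. -/
noncomputable def natRev {M : Type*} (r : M → ℕ) (P A : Set M) : M → ℕ := fun I =>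
  if r I < minidx r P then r I
  else if r I ≤ minidx r (P ∩ A) then
    (if I ∈ P ∩ Aᶜ then r I + (minidx r (P ∩ A) - minidx r P + 1) else r I)
  else r I + (minidx r (P ∩ A) - minidx r P + 1)

/-- uncontingent revision: the models of `P∧¬A` in classes
`minidx(P)..maxidx(P∧A)` are dropped below the other models of those classes. -/
noncomputable def uncRev {M : Type*} (r : M → ℕ) (P A : Set M) : M → ℕ := fun I =>
  if r I < minidx r P then r I
  else if r I ≤ maxidx r (P ∩ A) then
    (if I ∈ P ∩ Aᶜ then r I + (maxidx r (P ∩ A) - minidx r P + 1) else r I)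
  else r I + (maxidx r (P ∩ A) - minidx r P + 1)

/-- lexicographic revision: `C lex(F) = [C(0)∩F,…,C(m)∩F, C(0)∖F,…,C(m)∖F]` -/
noncomputable def lexRev {M : Type*} [Fintype M] (r : M → ℕ) (F : Set M) : M → ℕ := fun I =>
  if I ∈ F then r I else r I + (Finset.univ.sup r + 1)

/-- line-down revision: the minimal models of `P∧A` are lifted to a new class just
above class `minidx(P∧¬A)`; all other models keep their classes. -/
noncomputable def dowRev {M : Type*} (r : M → ℕ) (P A : Set M) : M → ℕ := fun I =>
  if minidx r (P ∩ A) < minidx r (P ∩ Aᶜ) then r I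
  else if I ∈ P ∩ A ∧ r I = minidx r (P ∩ A) then minidx r (P ∩ Aᶜ)
  else if r I < minidx r (P ∩ Aᶜ) then r I
  else r I + 1

/-- an order satisfies the conditional `P>A` iff every minimal model of `P∧A`
is strictly below every model of `P∧¬A` -/
def satisfiesCond {M : Type*} (r : M → ℕ) (P A : Set M) : Prop :=
  ∀ I ∈ P ∩ A, (∀ J ∈ P ∩ A, r I ≤ r J) → ∀ K ∈ P ∩ Aᶜ, r I < r K

/-- the order viewed as a set of pairs `I ≤ J` -/
def ordRel {M : Type*} (r : M → ℕ) : Set (M × M) := {p | r p.1 ≤ r p.2}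

/-- difference of two orders: symmetric difference of their sets of pairs -/
def diffOrd {M : Type*} (r r' : M → ℕ) : Set (M × M) := symmDiff (ordRel r) (ordRel r')

/-- equality of the induced connected preorders -/
def sameOrd {M : Type*} (r r' : M → ℕ) : Prop := ∀ I J : M, (r I ≤ r J ↔ r' I ≤ r' J)

/-- the contingent context of natural revision:
`C nat(P>A) = C unc(Q>A)` where `Q = P ∧ (≤min(P∧A))`. -/
theorem contingent_context {M : Type*} [Fintype M] (r : M → ℕ) (P A : Set M)
    (h : (P ∩ A).Nonempty) :
    sameOrd (natRev r P A)
      (uncRev r (P ∩ {I : M | r I ≤ minidx r (P ∩ A)}) A) := by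
  set m := minidx r (P ∩ A) with hm
  set p := minidx r P with hp
  set Q := P ∩ {I : M | r I ≤ m} with hQdef
  have hPAne : (r '' (P ∩ A)).Nonempty := h.image r
  obtain ⟨I₀, hI₀PA, hI₀⟩ := Nat.sInf_mem hPAne
  have hpm : p ≤ m := Nat.sInf_le ⟨I₀, hI₀PA.1, hI₀⟩
  have hPne : (r '' P).Nonempty := ⟨m, I₀, hI₀PA.1, hI₀⟩
  obtain ⟨I₁, hI₁P, hI₁⟩ := Nat.sInf_mem hPne
  have hI₁Q : I₁ ∈ Q := ⟨hI₁P, by exact hI₁.trans_le hpm⟩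
  -- minidx r Q = p
  have hQmin : minidx r Q = p := by
    refine le_antisymm (Nat.sInf_le ⟨I₁, hI₁Q, hI₁⟩) ?_
    obtain ⟨J, hJQ, hJ⟩ := Nat.sInf_mem (⟨r I₁, I₁, hI₁Q, rfl⟩ : (r '' Q).Nonempty)
    calc p ≤ r J := Nat.sInf_le ⟨J, hJQ.1, rfl⟩
      _ = minidx r Q := hJ
  -- Q ∩ A image = {m}
  have hI₀QA : I₀ ∈ Q ∩ A := ⟨⟨hI₀PA.1, le_of_eq hI₀⟩, hI₀PA.2⟩
  have himg : r '' (Q ∩ A) = {m} := by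
    ext n
    constructor
    · rintro ⟨J, ⟨⟨hJP, hJm⟩, hJA⟩, rfl⟩
      exact le_antisymm hJm (Nat.sInf_le ⟨J, ⟨hJP, hJA⟩, rfl⟩)
    · rintro rfl
      exact ⟨I₀, hI₀QA, hI₀⟩
  have hQAmin : minidx r (Q ∩ A) = m := by rw [minidx, himg, csInf_singleton]
  have hQAmax : maxidx r (Q ∩ A) = m := by rw [maxidx, himg, csSup_singleton]
  have heq : natRev r P A = uncRev r Q A := by
    funext I
    simp only [natRev, uncRev, hQmin, hQAmin, hQAmax, ← hm, ← hp]
    by_cases h1 : r I < p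
    · simp [h1]
    · simp only [h1, if_false]
      by_cases h2 : r I ≤ m
      · have : I ∈ Q ∩ Aᶜ ↔ I ∈ P ∩ Aᶜ := by
          constructor
          · rintro ⟨⟨hP, _⟩, hA⟩; exact ⟨hP, hA⟩
          · rintro ⟨hP, hA⟩; exact ⟨⟨hP, h2⟩, hA⟩
        simp [h2, this]
      · simp [h2]
  intro I J
  rw [heq]
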